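/- The entrant fitness function in the Cournot duopoly, h(r̂) = (1/2)·[a(r̂)·(β• - c) - a(r̂)²·r•] where a(r̂) = (β• - c)/(2r̂ + r•), is uniquely maximized over r̂ > 0 at r̂ = r•/2, where the entrant's quantity equals the Stackelberg quantity (β• - c)/(2r•). -/

import Mathlib

/-- The entrant fitness h(r̂) = (1/2)[a(r̂)(β - c) - a(r̂)²r] with
a(r̂) = (β - c)/(2r̂ + r) is uniquely maximized over r̂ > 0 at r̂ = r/2, where the entrant's
quantity equals the Stackelberg quantity (β - c)/(2r). -/
theorem cournot_entrant_fitness_maximizer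
    (r β c : ℝ) (hr : 0 < r) (hβ : c < β) :
    let a : ℝ → ℝ := fun rhat => (β - c) / (2 * rhat + r)
    let h : ℝ → ℝ := fun rhat => (1 / 2) * (a rhat * (β - c) - (a rhat) ^ 2 * r)
    (∀ rhat : ℝ, 0 < rhat → rhat ≠ r / 2 → h rhat < h (r / 2)) ∧
    a (r / 2) = (β - c) / (2 * r) := by
  intro a h
  constructor
  · intro rhat hpos hne
    have hd : 0 < 2 * rhat + r := by linarith
    have hd2 : (2 : ℝ) * (r / 2) + r = 2 * r := by ring
    have hsq : 0 < (2 * rhat - r) ^ 2 := by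
      have : 2 * rhat - r ≠ 0 := fun h0 => hne (by linarith)
      positivity
    have hb : 0 < β - c := by linarith
    simp only [h, a, hd2]
    rw [div_pow, div_pow]
    rw [show (1:ℝ)/2 * ((β - c) / (2 * rhat + r) * (β - c) - (β - c)^2 / (2 * rhat + r)^2 * r)
        = ((β-c)^2 * (2*rhat + r) - (β-c)^2 * r) / (2 * (2*rhat+r)^2) by
      field_simp]
    rw [show (1:ℝ)/2 * ((β - c) / (2 * r) * (β - c) - (β - c)^2 / (2 * r)^2 * r)
        = ((β-c)^2 * (2*r) - (β-c)^2 * r) / (2 * (2*r)^2) by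
      field_simp]
    rw [div_lt_div_iff₀ (by positivity) (by positivity)]
    nlinarith [mul_pos (mul_pos (pow_pos hb 2) hsq) hr]
  · simp only [a]
    rw [show (2:ℝ) * (r / 2) + r = 2 * r by ring]
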